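/- Let F be a set functor and Λ an F-relator. Then: (1) the class of Λ-simulations contains, for every pair of F-coalgebras, all coalgebra homomorphisms and their converses (as graph relations) if and only if for every function f with non-empty domain, Ff ≤ Λf and (Ff)° ≤ Λ(f°); (2) the class of Λ-simulations is closed under relational composition if and only if for all relations r : X ⇸ Y and s : Y ⇸ Z such that s · r is non-empty, Λs · Λr ≤ Λ(s · r); (3) the class of Λ-simulations is closed under converses if and only if for every non-empty relation r : X ⇸ Y, Λ(r°) = (Λr)°. -/

import Mathlib

open CategoryTheory Function

universe u

/-- Applicative composition of relations: `relComp s r = s · r`. -/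
def relComp {X Y Z : Type u} (s : Y → Z → Prop) (r : X → Y → Prop) : X → Z → Prop :=
  fun x z => ∃ y, r x y ∧ s y z

/-- Converse of a relation. -/
def relConv {X Y : Type u} (r : X → Y → Prop) : Y → X → Prop := fun y x => r x y

/-- Graph relation of a function. -/
def fgraph {X Y : Type u} (f : X → Y) : X → Y → Prop := fun x y => f x = y

/-- An `F`-relator: a monotone assignment of relations `F X ⇸ F Y` to relations `X ⇸ Y`. -/
structure Relator (F : Type u ⥤ Type u) : Type (u + 1) where
  map : ∀ {X Y : Type u}, (X → Y → Prop) → (F.obj X → F.obj Y → Prop)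
  mono : ∀ {X Y : Type u} {r s : X → Y → Prop}, (∀ x y, r x y → s x y) →
    ∀ u v, map r u v → map s u v

/-- `f` is a coalgebra homomorphism from `(X, α)` to `(Y, β)`. -/
def IsCoalgHom (F : Type u ⥤ Type u) {X Y : Type u} (α : X → F.obj X) (β : Y → F.obj Y)
    (f : X → Y) : Prop :=
  ∀ x, β (f x) = F.map (TypeCat.ofHom f) (α x)

/-- Behavioural equivalence of states. -/
def BehEq (F : Type u ⥤ Type u) {X Y : Type u} (α : X → F.obj X) (β : Y → F.obj Y)
    (x : X) (y : Y) : Prop :=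
  ∃ (Z : Type u) (γ : Z → F.obj Z) (f : X → Z) (g : Y → Z),
    IsCoalgHom F α γ f ∧ IsCoalgHom F β γ g ∧ f x = g y

/-- `r` is a `Λ`-simulation from `(X, α)` to `(Y, β)`: `r ≤ β° · Λr · α`. -/
def IsSimulation {F : Type u ⥤ Type u} (Λ : Relator F) {X Y : Type u}
    (α : X → F.obj X) (β : Y → F.obj Y) (r : X → Y → Prop) : Prop :=
  ∀ x y, r x y → Λ.map r (α x) (β y)

/-- `x` and `y` are `Λ`-similar: related by some `Λ`-simulation. -/
def LambdaSimilar {F : Type u ⥤ Type u} (Λ : Relator F) {X Y : Type u}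
    (α : X → F.obj X) (β : Y → F.obj Y) (x : X) (y : Y) : Prop :=
  ∃ r, IsSimulation Λ α β r ∧ r x y

/-- Characterizations of closure properties of the class of
`Λ`-simulations:
(1) it contains all coalgebra homomorphisms and their converses iff `Ff ≤ Λf` and
`(Ff)° ≤ Λ(f°)` for every function `f` with non-empty domain;
(2) it is closed under relational composition iff `Λs · Λr ≤ Λ(s · r)` whenever
`s · r` is non-empty;
(3) it is closed under converses iff `Λ(r°) = (Λr)°` for every non-empty `r`. -/
theorem stmt3 (F : Type u ⥤ Type u) (Λ : Relator F) :
    ((∀ (X Y : Type u) (α : X → F.obj X) (β : Y → F.obj Y) (f : X → Y),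
        IsCoalgHom F α β f →
          IsSimulation Λ α β (fgraph f) ∧ IsSimulation Λ β α (relConv (fgraph f))) ↔
      (∀ (X Y : Type u) (f : X → Y), Nonempty X →
        (∀ (u : F.obj X) (v : F.obj Y), F.map (TypeCat.ofHom f) u = v → Λ.map (fgraph f) u v) ∧
        (∀ (v : F.obj Y) (u : F.obj X), F.map (TypeCat.ofHom f) u = v → Λ.map (relConv (fgraph f)) v u)))
    ∧
    ((∀ (X Y Z : Type u) (α : X → F.obj X) (β : Y → F.obj Y) (γ : Z → F.obj Z)
        (r : X → Y → Prop) (s : Y → Z → Prop),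
        IsSimulation Λ α β r → IsSimulation Λ β γ s → IsSimulation Λ α γ (relComp s r)) ↔
      (∀ (X Y Z : Type u) (r : X → Y → Prop) (s : Y → Z → Prop),
        (∃ x z, relComp s r x z) →
        ∀ (u : F.obj X) (w : F.obj Z),
          relComp (Λ.map s) (Λ.map r) u w → Λ.map (relComp s r) u w))
    ∧
    ((∀ (X Y : Type u) (α : X → F.obj X) (β : Y → F.obj Y) (r : X → Y → Prop),
        IsSimulation Λ α β r → IsSimulation Λ β α (relConv r)) ↔
      (∀ (X Y : Type u) (r : X → Y → Prop), (∃ x y, r x y) →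
        ∀ (v : F.obj Y) (u : F.obj X), Λ.map (relConv r) v u ↔ relConv (Λ.map r) v u)) := by
  refine ⟨⟨fun h X Y f ⟨x0⟩ => ?_, fun h X Y α β f hf => ?_⟩,
    ⟨fun h X Y Z r s ⟨x0, z0, y0, hr0, hs0⟩ u w ⟨v, hru, hsv⟩ => ?_,
     fun h X Y Z α β γ r s hr hs x z ⟨y, hxy, hyz⟩ => ?_⟩,
    ⟨fun h X Y r ⟨x0, y0, h0⟩ v u => ?_, fun h X Y α β r hr y x hxy => ?_⟩⟩
  · constructor
    · intro u v huv
      have := (h X Y (fun _ => u) (fun _ => F.map (TypeCat.ofHom f) u) f (fun _ => rfl)).1 x0 (f x0) rfl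
      subst huv; exact this
    · intro v u huv
      have := (h X Y (fun _ => u) (fun _ => F.map (TypeCat.ofHom f) u) f (fun _ => rfl)).2 (f x0) x0 rfl
      subst huv; exact this
  · constructor
    · intro x y hxy
      have := (h X Y f ⟨x⟩).1 (α x) (β y)
      subst hxy; exact this (hf x).symm
    · intro y x hxy
      have := (h X Y f ⟨x⟩).2 (β y) (α x)
      subst hxy; exact this (hf x).symm
  · exact h X Y Z (fun _ => u) (fun _ => v) (fun _ => w) r s
      (fun _ _ _ => hru) (fun _ _ _ => hsv) x0 z0 ⟨y0, hr0, hs0⟩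
  · exact h X Y Z r s ⟨x, z, y, hxy, hyz⟩ (α x) (γ z) ⟨β y, hr x y hxy, hs y z hyz⟩
  · constructor
    · intro hc
      have := h Y X (fun _ => v) (fun _ => u) (relConv r) (fun _ _ _ => hc) x0 y0 h0
      exact this
    · intro hc
      exact h X Y (fun _ => u) (fun _ => v) r (fun _ _ _ => hc) y0 x0 h0
  · exact ((h X Y r ⟨x, y, hxy⟩ (β y) (α x)).2 (hr x y hxy))
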